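/- Let A be an abelian group such that the profinite completion = lim A/mA has finite exponent. Then the natural map A → Â is surjective and its kernel is a divisible group; in particular A is an extension of Â by a divisible group. -/

import Mathlib

/-- The subgroup `nA` of an abelian group `A`. -/
def nsub (A : Type) [AddCommGroup A] (n : ℕ) : AddSubgroup A :=
  AddMonoidHom.range (n • AddMonoidHom.id A)

theorem nsub_le (A : Type) [AddCommGroup A] {m n : ℕ} (h : m ∣ n) :
    nsub A n ≤ nsub A m := by
  rintro x ⟨a, rfl⟩
  obtain ⟨k, rfl⟩ := h
  exact ⟨k • a, by simp [mul_smul]⟩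

/-- Transition map `A/nA → A/mA` for `m ∣ n`. -/
def transMap (A : Type) [AddCommGroup A] {m n : ℕ} (h : m ∣ n) :
    (A ⧸ nsub A n) →+ (A ⧸ nsub A m) :=
  QuotientAddGroup.map _ _ (AddMonoidHom.id A) (fun x hx => nsub_le A h hx)

theorem transMap_mk (A : Type) [AddCommGroup A] {m n : ℕ} (h : m ∣ n) (a : A) :
    transMap A h ((a : A ⧸ nsub A n)) = (a : A ⧸ nsub A m) := rfl

/-- If the profinite completion `Â = lim A/mA` (compatible families over positive
integers ordered by divisibility) has finite exponent, then the natural map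
`A → Â` is surjective and its kernel is divisible: `A` is an extension of `Â` by
a divisible group. -/
theorem statement0 (A : Type) [AddCommGroup A]
    (hexp : ∃ e : ℕ, 0 < e ∧ ∀ f : ∀ m : ℕ+, A ⧸ nsub A m,
      (∀ (m n : ℕ+) (h : (m : ℕ) ∣ (n : ℕ)), transMap A h (f n) = f m) → e • f = 0) :
    (∀ f : ∀ m : ℕ+, A ⧸ nsub A m,
      (∀ (m n : ℕ+) (h : (m : ℕ) ∣ (n : ℕ)), transMap A h (f n) = f m) →
      ∃ a : A, (fun m : ℕ+ => ((a : A ⧸ nsub A m))) = f) ∧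
    (∀ n : ℕ, 0 < n → ∀ a : A, (∀ m : ℕ+, ((a : A ⧸ nsub A m)) = 0) →
      ∃ b : A, (∀ m : ℕ+, ((b : A ⧸ nsub A m)) = 0) ∧ n • b = a) := by
  obtain ⟨e, he, hE⟩ := hexp
  -- Key: `e • b ∈ mA` for every `b : A` and `m : ℕ+`.
  have key : ∀ (b : A) (m : ℕ+), ((e • b : A) : A ⧸ nsub A m) = (0 : A ⧸ nsub A m) := by
    intro b m
    have hcomp : ∀ (m n : ℕ+) (h : (m : ℕ) ∣ (n : ℕ)),
        transMap A h ((b : A ⧸ nsub A n)) = (b : A ⧸ nsub A m) := fun _ _ _ => rfl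
    have h0 := hE (fun m : ℕ+ => (b : A ⧸ nsub A m)) hcomp
    have h1 := congrFun h0 m
    simp only [Pi.smul_apply, Pi.zero_apply] at h1
    rw [← h1]
    exact (QuotientAddGroup.mk_nsmul (nsub A m) b e).symm
  have key' : ∀ b : A, ∀ m : ℕ+, (e • b) ∈ nsub A (m : ℕ) := by
    intro b m
    exact (QuotientAddGroup.eq_zero_iff _).mp (key b m)
  set ep : ℕ+ := ⟨e, he⟩ with hep
  constructor
  · intro f hf
    obtain ⟨a, ha⟩ := QuotientAddGroup.mk_surjective (f ep)
    refine ⟨a, funext fun m => ?_⟩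
    obtain ⟨c, hc⟩ := QuotientAddGroup.mk_surjective (f (ep * m))
    have hdm : (m : ℕ) ∣ ((ep * m : ℕ+) : ℕ) := ⟨e, Nat.mul_comm _ _⟩
    have hde : (ep : ℕ) ∣ ((ep * m : ℕ+) : ℕ) := ⟨m, rfl⟩
    have hcm : (c : A ⧸ nsub A m) = f m := by
      rw [← hf m (ep * m) hdm, ← hc, transMap_mk]
    have hce : (c : A ⧸ nsub A ep) = f ep := by
      rw [← hf ep (ep * m) hde, ← hc, transMap_mk]
    -- a - c ∈ eA ⊆ mA
    have hsub : a - c ∈ nsub A (ep : ℕ) := by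
      rw [← QuotientAddGroup.eq_zero_iff]
      have : ((a : A ⧸ nsub A ep)) = ((c : A ⧸ nsub A ep)) := by rw [ha, hce]
      simpa [QuotientAddGroup.mk_sub, sub_eq_zero] using this
    obtain ⟨x, hx⟩ := hsub
    have hx' : a - c = e • x := hx.symm
    have : ((a : A ⧸ nsub A m)) = ((c : A ⧸ nsub A m)) := by
      have h0 : ((a - c : A) : A ⧸ nsub A m) = 0 := by rw [hx']; exact key x m
      rw [QuotientAddGroup.mk_sub, sub_eq_zero] at h0
      exact h0
    rw [this, hcm]
  · intro n hn a ha
    obtain ⟨x, hx⟩ := (QuotientAddGroup.eq_zero_iff _).mp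
      (ha (⟨n * e, Nat.mul_pos hn he⟩ : ℕ+))
    -- hx : (n * e) • x = a
    refine ⟨e • x, fun m => key x m, ?_⟩
    rw [smul_smul]
    simpa using hx
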